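/- Let u be a necklace of length n with 2·rank(u) ≤ n and let x be a representative of u; every unmatched position of x carries a 0. Let y be the word obtained from x by changing every unmatched position to 1, and let v be the necklace of y. Then rank(v) = n − rank(u) (so 2·rank(v) ≥ n), the matched pairs of y equal those of x, the unmatched positions of y are exactly the changed positions (all carrying 1), and changing all unmatched positions of y back to 0 recovers x. Consequently, if w is the Lyndon rearrangement of y with m = rank(v) − rank(u) unmatched positions, then u = necklace of w_m. -/

import Mathlib

/-!
Common definitions: binary words of length `n`, rotations, necklaces (the quotient
poset `Bₙ/Cₙ`), the cyclic matching procedure, Lyndon words, the map `φ`,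
crossing pairs, and the words `w_t`.

Throughout, a binary word of length `n` is a function `Fin n → Bool`, where `true`
encodes the letter `1` and `false` the letter `0`.
-/

/-- A binary word of length `n`: `true` encodes the letter `1`, `false` the letter `0`. -/
abbrev Word (n : ℕ) := Fin n → Bool

variable {n : ℕ} [NeZero n]

/-- The rotation `σ_i`, shifting the letters of `w` cyclically by `i` positions (so the
letter at position `j` of `w` appears at position `j + i` of `rot i w`). -/
def rot (i : Fin n) (w : Word n) : Word n := fun j => w (j - i)

lemma rot_rot (i j : Fin n) (w : Word n) : rot i (rot j w) = rot (j + i) w := by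
  funext k
  simp [rot, sub_sub, add_comm]

/-- Two words are equivalent when one is a cyclic rotation of the other. -/
def rotSetoid (n : ℕ) [NeZero n] : Setoid (Word n) where
  r w w' := ∃ i : Fin n, rot i w = w'
  iseqv := by
    refine ⟨fun w => ⟨0, ?_⟩, ?_, ?_⟩
    · funext j; simp [rot]
    · rintro w w' ⟨i, rfl⟩
      refine ⟨-i, ?_⟩
      rw [rot_rot]
      funext j; simp [rot]
    · rintro w w' w'' ⟨i, rfl⟩ ⟨j, rfl⟩
      exact ⟨i + j, (rot_rot j i w).symm⟩

/-- A necklace: an equivalence class of binary words under cyclic rotation. -/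
abbrev Necklace (n : ℕ) [NeZero n] := Quotient (rotSetoid n)

/-- The necklace of a word. -/
def nec (w : Word n) : Necklace n := Quotient.mk (rotSetoid n) w

/-- The number of `1`s in a word. -/
def wt (w : Word n) : ℕ := (Finset.univ.filter fun i => w i = true).card

/-- The number of `0`s in a word. -/
def zeros (w : Word n) : ℕ := (Finset.univ.filter fun i => w i = false).card

/-- The rank of a necklace: the number of `1`s in any representative. -/
noncomputable def rank (u : Necklace n) : ℕ := wt (Quotient.out u)

/-- The set of positions belonging to some pair of `M`. -/
def matchedPos (M : Finset (Fin n × Fin n)) : Finset (Fin n) :=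
  M.image Prod.fst ∪ M.image Prod.snd

/-- `j` is the first position outside `S` encountered strictly after `i` in the cyclic
order `i+1, i+2, …` (indices mod `n`). -/
def FirstAfter (S : Finset (Fin n)) (i j : Fin n) : Prop :=
  j ∉ S ∧ j ≠ i ∧ ∀ k : Fin n, k ∉ S → k ≠ i → (j - i).val ≤ (k - i).val

/-- One step of the cyclic matching procedure on the word `w`: choose an as-yet-unmatched
position `i` carrying the letter `0` such that the first as-yet-unmatched position `j`
after `i` in cyclic order carries the letter `1`, and declare `{i, j}` a matched pair
(recorded as the ordered pair `(i, j)`, the `0`-position first). -/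
inductive MatchStep (w : Word n) :
    Finset (Fin n × Fin n) → Finset (Fin n × Fin n) → Prop
  | step {M : Finset (Fin n × Fin n)} {i j : Fin n}
      (hi : i ∉ matchedPos M) (hw : w i = false)
      (hj : FirstAfter (matchedPos M) i j) (hj1 : w j = true) :
      MatchStep w M (insert (i, j) M)

/-- A maximal execution of the cyclic matching procedure on `w`, starting from the empty
matching: `M` is reachable from `∅` by matching steps and no further step is possible. -/
def IsMaximalMatching (w : Word n) (M : Finset (Fin n × Fin n)) : Prop :=
  Relation.ReflTransGen (MatchStep w) ∅ M ∧ ∀ M', ¬ MatchStep w M M'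

/-- The cyclic matching of `w`: the set of matched pairs produced by (any) maximal
execution of the cyclic matching procedure. -/
noncomputable def matching (w : Word n) : Finset (Fin n × Fin n) :=
  letI := Classical.dec (∃ M, IsMaximalMatching w M)
  if h : ∃ M, IsMaximalMatching w M then h.choose else ∅

/-- The unmatched positions of `w`: positions belonging to no matched pair. -/
noncomputable def unmatchedPos (w : Word n) : Finset (Fin n) :=
  Finset.univ \ matchedPos (matching w)

/-- Lexicographic comparison of words with respect to the letter order `1 ≺ 0`
(recall `true` encodes `1` and `false` encodes `0`). -/
def lexLE (w w' : Word n) : Prop :=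
  w = w' ∨ ∃ i : Fin n, (∀ j : Fin n, j < i → w j = w' j) ∧ w i = true ∧ w' i = false

/-- A word is Lyndon if it is lexicographically smallest among all of its rotations,
with respect to the letter order `1 ≺ 0`. -/
def IsLyndon (w : Word n) : Prop := ∀ i : Fin n, lexLE w (rot i w)

/-- The Lyndon rearrangement of `w`: its lexicographically smallest rotation. -/
noncomputable def lyndonOf (w : Word n) : Word n :=
  letI := Classical.dec (∃ i : Fin n, IsLyndon (rot i w))
  if h : ∃ i : Fin n, IsLyndon (rot i w) then rot h.choose w else w

/-- Change the letter at the rightmost unmatched position of `w` to `0`. -/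
noncomputable def flipTop (w : Word n) : Word n :=
  if h : (unmatchedPos w).Nonempty then
    Function.update w ((unmatchedPos w).max' h) false
  else w

/-- The map `φ`: take the Lyndon rearrangement of a representative and change the letter
at its rightmost unmatched position (which carries a `1` on the upper half of ranks)
to `0`. -/
noncomputable def phi (u : Necklace n) : Necklace n :=
  nec (flipTop (lyndonOf (Quotient.out u)))

/-- `x` lies strictly inside the cyclic arc running from `i` (exclusive) to `k`
(exclusive), in the cyclic order of positions. -/
def StrictBtw (i x k : Fin n) : Prop :=
  0 < (x - i).val ∧ (x - i).val < (k - i).val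

/-- The pairs `{i, k}` and `{j, l}` cross: exactly one of `j, l` lies strictly inside one
of the two cyclic arcs determined by `i` and `k`. -/
def Crosses (i k j l : Fin n) : Prop := Xor' (StrictBtw i j k) (StrictBtw i l k)

/-- `wT w t` is the word obtained from `w` by changing the letters at the last `t`
unmatched positions of `w` to `0`; that is, if the unmatched positions of `w` are
`p₁ < … < p_m`, the positions `p_{m-t+1}, …, p_m` are changed to `0`. -/
noncomputable def wT (w : Word n) (t : ℕ) : Word n := fun j =>
  if j ∈ unmatchedPos w ∧ ((unmatchedPos w).filter fun k => j ≤ k).card ≤ t then false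
  else w j

/-- The order on necklaces (the poset `Bₙ/Cₙ`): `u ≤ v` iff there are representatives
`w` of `u` and `w'` of `v` such that every position carrying `1` in `w` also carries `1`
in `w'`. -/
def nle (u v : Necklace n) : Prop :=
  ∃ w w' : Word n, nec w = u ∧ nec w' = v ∧ ∀ i, w i = true → w' i = true

/-- The strict order on necklaces. -/
def nlt (u v : Necklace n) : Prop := nle u v ∧ u ≠ v

/-- `v` covers `u` in `Bₙ/Cₙ`: `u < v` and there is no `z` with `u < z < v`. -/
def ncovBy (u v : Necklace n) : Prop := nlt u v ∧ ∀ z, nlt u z → ¬ nlt z v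

/-- A chain top: a necklace `v` in the upper half of ranks (`2·rank v ≥ n`) which is not
the image under `φ` of any necklace in the strict upper half of ranks. -/
def IsChainTop (v : Necklace n) : Prop :=
  n ≤ 2 * rank v ∧ ∀ u : Necklace n, n < 2 * rank u → phi u ≠ v

/-- The `φ`-string below the chain top `v`: the necklaces of the words `w_t`,
`0 ≤ t ≤ m`, where `w` is the Lyndon representative of `v` and `m = 2·rank v − n`. -/
noncomputable def chainOf (v : Necklace n) : Set (Necklace n) :=
  { u | ∃ t ≤ 2 * rank v - n, u = nec (wT (lyndonOf (Quotient.out v)) t) }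

section Aux

set_option linter.unusedSectionVars false

open Relation Finset

lemma finSubVal (a b : Fin n) :
    (a - b).val = if b.val ≤ a.val then a.val - b.val else a.val + n - b.val := by
  rcases a with ⟨a, ha⟩; rcases b with ⟨b, hb⟩
  simp only [Fin.sub_def]
  rcases le_or_gt b a with h | h
  · rw [if_pos h]
    have e : n - b + a = (a - b) + n := by omega
    rw [e, Nat.add_mod_right, Nat.mod_eq_of_lt (by omega)]
  · rw [if_neg (by omega), Nat.mod_eq_of_lt (by omega)]
    omega

lemma finSubAdd {a b : Fin n} (h : a ≠ b) : (a - b).val + (b - a).val = n := by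
  have hv : a.val ≠ b.val := fun hh => h (Fin.ext hh)
  have ha := a.isLt; have hb := b.isLt
  rw [finSubVal, finSubVal]
  split_ifs <;> omega

lemma finSubZero {a b : Fin n} (h : (a - b).val = 0) : a = b := by
  have : a - b = 0 := Fin.ext (by simpa using h)
  exact sub_eq_zero.mp this

lemma matchedPos_insert (p : Fin n × Fin n) (M : Finset (Fin n × Fin n)) :
    matchedPos (insert p M) = insert p.1 (insert p.2 (matchedPos M)) := by
  unfold matchedPos
  rw [Finset.image_insert, Finset.image_insert, Finset.insert_union, Finset.union_insert]

lemma matchedPos_mono {M M' : Finset (Fin n × Fin n)} (h : M ⊆ M') :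
    matchedPos M ⊆ matchedPos M' :=
  Finset.union_subset_union (Finset.image_subset_image h) (Finset.image_subset_image h)

lemma fst_mem_matchedPos {M : Finset (Fin n × Fin n)} {i j : Fin n} (h : (i, j) ∈ M) :
    i ∈ matchedPos M :=
  Finset.mem_union_left _ (Finset.mem_image_of_mem _ h)

lemma FirstAfter.unique {S : Finset (Fin n)} {i j j' : Fin n}
    (h : FirstAfter S i j) (h' : FirstAfter S i j') : j = j' := by
  have h1 := h.2.2 j' h'.1 h'.2.1
  have h2 := h'.2.2 j h.1 h.2.1
  exact sub_left_inj.mp (Fin.ext (le_antisymm h1 h2))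

lemma firstAfter_inj {S : Finset (Fin n)} {i i' j : Fin n}
    (hii' : i ≠ i') (hiS : i ∉ S) (hi'S : i' ∉ S) (hji' : j ≠ i')
    (h : FirstAfter S i j) (h' : FirstAfter S i' j) : False := by
  have h1 : (j - i).val ≤ (i' - i).val := h.2.2 i' hi'S (Ne.symm hii')
  have h1' : (j - i).val ≠ (i' - i).val := fun e => hji' (sub_left_inj.mp (Fin.ext e))
  have h2 : (j - i').val ≤ (i - i').val := h'.2.2 i hiS hii'
  have h3 : (j - i).val ≠ 0 := fun e => h.2.1 (finSubZero e)
  have h5 := finSubAdd hii'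
  have key : (j - i) - (i' - i) = j - i' := sub_sub_sub_cancel_right j i' i
  have h4 : (j - i').val = (j - i).val + n - (i' - i).val := by
    rw [← key, finSubVal, if_neg (by omega)]
  have := (i' - i).isLt
  omega

lemma MatchStep.subset {w : Word n} {M M' : Finset (Fin n × Fin n)}
    (h : MatchStep w M M') : M ⊆ M' := by
  cases h; exact Finset.subset_insert _ _

lemma MatchStep.card_matchedPos {w : Word n} {M M' : Finset (Fin n × Fin n)}
    (h : MatchStep w M M') : (matchedPos M').card = (matchedPos M).card + 2 := by
  cases h with
  | @step i j hi hwi hj hj1 =>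
    rw [matchedPos_insert]
    have hij : i ≠ j := fun e => by rw [e, hj1] at hwi; exact absurd hwi (by simp)
    rw [Finset.card_insert_of_notMem (by simp [hij, hi]),
      Finset.card_insert_of_notMem hj.1]

lemma matchStep_diamond {w : Word n} {M M₁ M₂ : Finset (Fin n × Fin n)}
    (h1 : MatchStep w M M₁) (h2 : MatchStep w M M₂) :
    M₁ = M₂ ∨ ∃ D, MatchStep w M₁ D ∧ MatchStep w M₂ D := by
  cases h1 with
  | @step i j hi hwi hj hj1 =>
    cases h2 with
    | @step i' j' hi' hwi' hj' hj1' =>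
      by_cases hii : i = i'
      · subst hii
        left
        rw [hj.unique hj']
      · right
        have hji' : j ≠ i' := fun e => by rw [e, hwi'] at hj1; exact absurd hj1 (by simp)
        have hj'i : j' ≠ i := fun e => by rw [e, hwi] at hj1'; exact absurd hj1' (by simp)
        have hjj' : j ≠ j' := by
          intro e
          subst e
          exact firstAfter_inj hii hi hi' hji' hj hj'
        have step1 : MatchStep w (insert (i, j) M) (insert (i', j') (insert (i, j) M)) := by
          refine MatchStep.step ?_ hwi' ?_ hj1'
          · rw [matchedPos_insert]
            simp only [Finset.mem_insert]
            push_neg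
            exact ⟨fun e => hii e.symm, Ne.symm hji', hi'⟩
          · refine ⟨?_, hj'.2.1, ?_⟩
            · rw [matchedPos_insert]
              simp only [Finset.mem_insert]
              push_neg
              exact ⟨hj'i, Ne.symm hjj', hj'.1⟩
            · intro k hk hki
              refine hj'.2.2 k (fun hm => hk ?_) hki
              exact matchedPos_mono (Finset.subset_insert _ _) hm
        have step2 : MatchStep w (insert (i', j') M) (insert (i, j) (insert (i', j') M)) := by
          refine MatchStep.step ?_ hwi ?_ hj1
          · rw [matchedPos_insert]
            simp only [Finset.mem_insert]
            push_neg
            exact ⟨hii, Ne.symm hj'i, hi⟩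
          · refine ⟨?_, hj.2.1, ?_⟩
            · rw [matchedPos_insert]
              simp only [Finset.mem_insert]
              push_neg
              exact ⟨hji', hjj', hj.1⟩
            · intro k hk hki
              refine hj.2.2 k (fun hm => hk ?_) hki
              exact matchedPos_mono (Finset.subset_insert _ _) hm
        exact ⟨insert (i', j') (insert (i, j) M), step1, by rwa [Finset.insert_comm]⟩

lemma matchedPos_card_le {M : Finset (Fin n × Fin n)} : (matchedPos M).card ≤ n := by
  simpa using Finset.card_le_univ (matchedPos M)

lemma exists_maximal (w : Word n) : ∃ M, IsMaximalMatching w M := by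
  suffices h : ∀ k (M : Finset (Fin n × Fin n)),
      Relation.ReflTransGen (MatchStep w) ∅ M → n - (matchedPos M).card ≤ k →
      ∃ M', IsMaximalMatching w M' by
    exact h n ∅ .refl (by omega)
  intro k
  induction k with
  | zero =>
    intro M hM hc
    by_cases hs : ∃ M', MatchStep w M M'
    · obtain ⟨M', hM'⟩ := hs
      have h1 := hM'.card_matchedPos
      have h2 := matchedPos_card_le (M := M')
      omega
    · exact ⟨M, hM, fun M' h => hs ⟨M', h⟩⟩
  | succ k ih =>
    intro M hM hc
    by_cases hs : ∃ M', MatchStep w M M'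
    · obtain ⟨M', hM'⟩ := hs
      have h1 := hM'.card_matchedPos
      have h2 := matchedPos_card_le (M := M')
      exact ih M' (hM.tail hM') (by omega)
    · exact ⟨M, hM, fun M' h => hs ⟨M', h⟩⟩

lemma normal_eq {w : Word n} {M d : Finset (Fin n × Fin n)}
    (hnorm : ∀ M', ¬ MatchStep w M M')
    (h : Relation.ReflTransGen (MatchStep w) M d) : M = d := by
  rcases h.cases_head with h | ⟨c, hc, _⟩
  · exact h
  · exact absurd hc (hnorm c)

lemma maximal_unique {w : Word n} {M M' : Finset (Fin n × Fin n)}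
    (h : IsMaximalMatching w M) (h' : IsMaximalMatching w M') : M = M' := by
  have cr : ∀ a b c, MatchStep w a b → MatchStep w a c →
      ∃ d, ReflGen (MatchStep w) b d ∧ ReflTransGen (MatchStep w) c d := by
    intro a b c hab hac
    rcases matchStep_diamond hab hac with e | ⟨D, hD1, hD2⟩
    · exact ⟨b, .refl, by rw [← e]⟩
    · exact ⟨D, .single hD1, .single hD2⟩
  obtain ⟨d, hMd, hM'd⟩ := Relation.church_rosser cr h.1 h'.1
  rw [normal_eq h.2 hMd, normal_eq h'.2 hM'd]

lemma matching_isMaximal (w : Word n) : IsMaximalMatching w (matching w) := by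
  unfold matching
  split
  · exact Exists.choose_spec ‹_›
  · exact absurd (exists_maximal w) ‹_›

lemma matching_eq {w : Word n} {M : Finset (Fin n × Fin n)}
    (h : IsMaximalMatching w M) : matching w = M :=
  maximal_unique (matching_isMaximal w) h

lemma reach_count {w : Word n} {M : Finset (Fin n × Fin n)}
    (h : Relation.ReflTransGen (MatchStep w) ∅ M) :
    (matchedPos M).card = 2 * M.card ∧
    ((matchedPos M).filter (fun p => w p = true)).card = M.card := by
  induction h with
  | refl => simp [matchedPos]
  | @tail b c hMN hstep ih =>
    obtain ⟨ih1, ih2⟩ := ih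
    cases hstep with
    | @step i j hi hwi hj hj1 =>
      have hij : i ≠ j := fun e => by rw [e, hj1] at hwi; exact absurd hwi (by simp)
      have hpM : (i, j) ∉ b := fun hm => hi (fst_mem_matchedPos hm)
      constructor
      · rw [matchedPos_insert, Finset.card_insert_of_notMem (by simp [hij, hi]),
          Finset.card_insert_of_notMem hj.1, Finset.card_insert_of_notMem hpM]
        omega
      · rw [matchedPos_insert, Finset.filter_insert, Finset.filter_insert,
          if_neg (by simp [hwi]), if_pos hj1,
          Finset.card_insert_of_notMem (fun hm => hj.1 (Finset.mem_filter.mp hm).1),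
          Finset.card_insert_of_notMem hpM]
        omega

lemma wt_add_zeros (w : Word n) : wt w + zeros w = n := by
  have := Finset.card_filter_add_card_filter_not
    (s := (Finset.univ : Finset (Fin n))) (p := fun p => w p = true)
  simp only [Bool.not_eq_true] at this
  simpa [wt, zeros] using this

lemma wt_eq {w : Word n} {M : Finset (Fin n × Fin n)}
    (h : Relation.ReflTransGen (MatchStep w) ∅ M) :
    wt w = M.card + ((Finset.univ \ matchedPos M).filter (fun p => w p = true)).card := by
  unfold wt
  conv_lhs => rw [← Finset.union_sdiff_of_subset (Finset.subset_univ (matchedPos M))]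
  rw [Finset.filter_union,
    Finset.card_union_of_disjoint
      (Finset.disjoint_filter_filter Finset.disjoint_sdiff), (reach_count h).2]

lemma zeros_eq {w : Word n} {M : Finset (Fin n × Fin n)}
    (h : Relation.ReflTransGen (MatchStep w) ∅ M) :
    zeros w = M.card + ((Finset.univ \ matchedPos M).filter (fun p => w p = false)).card := by
  have h1 : ((matchedPos M).filter (fun p => w p = false)).card = M.card := by
    have h2 := Finset.card_filter_add_card_filter_not
      (s := matchedPos M) (p := fun p => w p = true)
    simp only [Bool.not_eq_true] at h2
    have h3 := (reach_count h).1
    have h4 := (reach_count h).2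
    omega
  unfold zeros
  conv_lhs => rw [← Finset.union_sdiff_of_subset (Finset.subset_univ (matchedPos M))]
  rw [Finset.filter_union,
    Finset.card_union_of_disjoint
      (Finset.disjoint_filter_filter Finset.disjoint_sdiff), h1]

lemma exists_step_of_mixed {w : Word n} {M : Finset (Fin n × Fin n)} {p q : Fin n}
    (hp : p ∉ matchedPos M) (hp0 : w p = false)
    (hq : q ∉ matchedPos M) (hq1 : w q = true) :
    ∃ M', MatchStep w M M' := by
  classical
  have hpF0 : p ∈ (Finset.univ \ matchedPos M).filter (fun k => w k = false) := by
    simp [hp, hp0]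
  obtain ⟨i, hiF0, himin⟩ :=
    Finset.exists_min_image _ (fun k => (q - k).val) ⟨p, hpF0⟩
  rw [Finset.mem_filter, Finset.mem_sdiff] at hiF0
  have hiM : i ∉ matchedPos M := hiF0.1.2
  have hwi : w i = false := hiF0.2
  have hiq : i ≠ q := fun e => by rw [e, hq1] at hwi; exact absurd hwi (by simp)
  have hqF : q ∈ (Finset.univ \ matchedPos M).erase i := by
    rw [Finset.mem_erase, Finset.mem_sdiff]
    exact ⟨Ne.symm hiq, Finset.mem_univ q, hq⟩
  obtain ⟨j, hjF, hjmin⟩ :=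
    Finset.exists_min_image _ (fun k => (k - i).val) ⟨q, hqF⟩
  rw [Finset.mem_erase, Finset.mem_sdiff] at hjF
  have hjM : j ∉ matchedPos M := hjF.2.2
  have hjne : j ≠ i := hjF.1
  have hFA : FirstAfter (matchedPos M) i j := by
    refine ⟨hjM, hjne, fun k hk hki => hjmin k ?_⟩
    rw [Finset.mem_erase, Finset.mem_sdiff]
    exact ⟨hki, Finset.mem_univ k, hk⟩
  have hj1 : w j = true := by
    by_contra hcon
    have hj0 : w j = false := by revert hcon; cases w j <;> simp
    have hjF0 : j ∈ (Finset.univ \ matchedPos M).filter (fun k => w k = false) := by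
      simp [hjM, hj0]
    have h1 : (j - i).val ≤ (q - i).val := hjmin q hqF
    have hjq : j ≠ q := fun e => by rw [e, hq1] at hj0; exact absurd hj0 (by simp)
    have h2 : (j - i).val ≠ (q - i).val := fun e => hjq (sub_left_inj.mp (Fin.ext e))
    have h3 : (j - i).val ≠ 0 := fun e => hjne (finSubZero e)
    have key : (q - i) - (j - i) = q - j := sub_sub_sub_cancel_right q j i
    have h4 : (q - j).val = (q - i).val - (j - i).val := by
      rw [← key, finSubVal, if_pos (by omega)]
    have h5 := himin j hjF0
    omega
  exact ⟨_, MatchStep.step hiM hwi hFA hj1⟩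

lemma free_false_of_maximal {w : Word n} {M : Finset (Fin n × Fin n)}
    (h : IsMaximalMatching w M) (hw : 2 * wt w ≤ n) :
    ∀ p ∈ Finset.univ \ matchedPos M, w p = false := by
  intro q hqmem
  by_contra hcon
  have hq1 : w q = true := by revert hcon; cases w q <;> simp
  have hqM : q ∉ matchedPos M := (Finset.mem_sdiff.mp hqmem).2
  have hff : ((Finset.univ \ matchedPos M).filter (fun k => w k = false)) = ∅ := by
    by_contra hne
    obtain ⟨p, hpmem⟩ := Finset.nonempty_iff_ne_empty.mpr hne
    rw [Finset.mem_filter, Finset.mem_sdiff] at hpmem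
    obtain ⟨M', hM'⟩ := exists_step_of_mixed hpmem.1.2 hpmem.2 hqM hq1
    exact h.2 M' hM'
  have hwt := wt_eq h.1
  have hz := zeros_eq h.1
  have hwz := wt_add_zeros w
  have hqft : 0 < ((Finset.univ \ matchedPos M).filter (fun k => w k = true)).card :=
    Finset.card_pos.mpr ⟨q, by simp [hqM, hq1]⟩
  rw [hff] at hz
  simp at hz
  omega

lemma reach_mono {w : Word n} {M M' : Finset (Fin n × Fin n)}
    (h : Relation.ReflTransGen (MatchStep w) M M') : M ⊆ M' := by
  induction h with
  | refl => exact subset_rfl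
  | tail _ hstep ih => exact ih.trans hstep.subset

lemma replay {w w' : Word n} {M M' : Finset (Fin n × Fin n)}
    (h : Relation.ReflTransGen (MatchStep w) M M')
    (hagree : ∀ p ∈ matchedPos M', w' p = w p) :
    Relation.ReflTransGen (MatchStep w') M M' := by
  induction h using Relation.ReflTransGen.head_induction_on with
  | refl => exact .refl
  | head hstep hrest ih =>
    refine Relation.ReflTransGen.head ?_ ih
    cases hstep with
    | @step i j hi hwi hj hj1 =>
      have hsub := matchedPos_mono (reach_mono hrest)
      have hiM : i ∈ matchedPos M' := hsub (by rw [matchedPos_insert]; simp)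
      have hjM : j ∈ matchedPos M' := hsub (by rw [matchedPos_insert]; simp)
      exact MatchStep.step hi (by rw [hagree i hiM]; exact hwi) hj
        (by rw [hagree j hjM]; exact hj1)

lemma rot_zero (w : Word n) : rot 0 w = w := by
  funext j; simp [rot]

lemma mem_image_add {S : Finset (Fin n)} {i x : Fin n} :
    x ∈ S.image (· + i) ↔ x - i ∈ S := by
  rw [Finset.mem_image]
  constructor
  · rintro ⟨a, ha, rfl⟩; simpa [add_sub_cancel_right] using ha
  · intro h; exact ⟨x - i, h, sub_add_cancel x i⟩

lemma matchedPos_image (i : Fin n) (M : Finset (Fin n × Fin n)) :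
    matchedPos (M.image (fun p => (p.1 + i, p.2 + i))) = (matchedPos M).image (· + i) := by
  unfold matchedPos
  rw [Finset.image_union, Finset.image_image, Finset.image_image,
    Finset.image_image, Finset.image_image]
  rfl

lemma firstAfter_image {S : Finset (Fin n)} {a b i : Fin n} (h : FirstAfter S a b) :
    FirstAfter (S.image (· + i)) (a + i) (b + i) := by
  refine ⟨?_, ?_, ?_⟩
  · rw [mem_image_add, add_sub_cancel_right]; exact h.1
  · intro e; exact h.2.1 (add_right_cancel e)
  · intro k hk hki
    have h1 := h.2.2 (k - i) (by rwa [mem_image_add] at hk)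
      (fun e => hki (by rw [← e, sub_add_cancel]))
    have e1 : b + i - (a + i) = b - a := by abel
    have e2 : k - (a + i) = (k - i) - a := by abel
    rw [e1, e2]; exact h1

lemma matchStep_image {w : Word n} {M M' : Finset (Fin n × Fin n)} (i : Fin n)
    (h : MatchStep w M M') :
    MatchStep (rot i w) (M.image (fun p => (p.1 + i, p.2 + i)))
      (M'.image (fun p => (p.1 + i, p.2 + i))) := by
  have key : ∀ c : Fin n, rot i w (c + i) = w c := fun c => by
    simp [rot, add_sub_cancel_right]
  cases h with
  | @step a b ha hwa hb hb1 =>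
    rw [Finset.image_insert]
    exact MatchStep.step
      (by rw [matchedPos_image, mem_image_add, add_sub_cancel_right]; exact ha)
      (by rw [key]; exact hwa)
      (by rw [matchedPos_image]; exact firstAfter_image hb)
      (by rw [key]; exact hb1)

lemma image_sh_inv (i : Fin n) (M : Finset (Fin n × Fin n)) :
    ((M.image (fun p => (p.1 + i, p.2 + i))).image (fun p => (p.1 + (-i), p.2 + (-i)))) = M := by
  rw [Finset.image_image]
  have : ((fun p : Fin n × Fin n => (p.1 + (-i), p.2 + (-i))) ∘
      (fun p : Fin n × Fin n => (p.1 + i, p.2 + i))) = id := by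
    funext p; simp
  rw [this, Finset.image_id]

lemma rot_neg_rot (i : Fin n) (w : Word n) : rot (-i) (rot i w) = w := by
  rw [rot_rot]
  simp [rot_zero]

lemma matching_rot (i : Fin n) (w : Word n) :
    matching (rot i w) = (matching w).image (fun p => (p.1 + i, p.2 + i)) := by
  apply matching_eq
  constructor
  · have hmap : ∀ M M' : Finset (Fin n × Fin n),
        Relation.ReflTransGen (MatchStep w) M M' →
        Relation.ReflTransGen (MatchStep (rot i w))
          (M.image (fun p => (p.1 + i, p.2 + i))) (M'.image (fun p => (p.1 + i, p.2 + i))) := by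
      intro M M' h
      induction h with
      | refl => exact .refl
      | tail _ hstep ih => exact ih.tail (matchStep_image i hstep)
    have := hmap ∅ (matching w) (matching_isMaximal w).1
    simpa using this
  · intro N hN
    have h2 := matchStep_image (-i) hN
    rw [rot_neg_rot, image_sh_inv] at h2
    exact (matching_isMaximal w).2 _ h2

lemma unmatched_rot_mem {w : Word n} {i j : Fin n} :
    j ∈ unmatchedPos (rot i w) ↔ j - i ∈ unmatchedPos w := by
  unfold unmatchedPos
  rw [matching_rot, matchedPos_image]
  simp [mem_image_add, sub_eq_add_neg]

lemma unmatchedPos_rot (i : Fin n) (w : Word n) :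
    unmatchedPos (rot i w) = (unmatchedPos w).image (· + i) := by
  ext j
  rw [unmatched_rot_mem, mem_image_add]

lemma wt_rot (i : Fin n) (w : Word n) : wt (rot i w) = wt w := by
  unfold wt
  have hset : (Finset.univ.filter fun j => rot i w j = true) =
      (Finset.univ.filter fun j => w j = true).image (· + i) := by
    ext j
    rw [mem_image_add]
    rw [Finset.mem_filter, Finset.mem_filter]; simp [rot]
  rw [hset, Finset.card_image_of_injective _ (add_left_injective i)]

lemma nec_rot (i : Fin n) (w : Word n) : nec (rot i w) = nec w :=
  Quotient.sound ⟨-i, rot_neg_rot i w⟩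

lemma rank_nec (w : Word n) : rank (nec w) = wt w := by
  unfold rank
  have h : nec (Quotient.out (nec w)) = nec w := Quotient.out_eq _
  obtain ⟨i, hi⟩ := Quotient.exact h
  conv_rhs => rw [← hi]
  rw [wt_rot]

lemma lyndonOf_eq_rot (w : Word n) : ∃ i, lyndonOf w = rot i w := by
  unfold lyndonOf
  split
  · exact ⟨_, rfl⟩
  · exact ⟨0, (rot_zero w).symm⟩

lemma wT_card_eq (w : Word n) :
    wT w (unmatchedPos w).card = fun j => if j ∈ unmatchedPos w then false else w j := by
  funext j
  unfold wT
  by_cases hj : j ∈ unmatchedPos w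
  · rw [if_pos ⟨hj, Finset.card_filter_le _ _⟩, if_pos hj]
  · rw [if_neg (fun hc => hj hc.1), if_neg hj]

end Aux

/-- Let `u` be a necklace with `2·rank u ≤ n` and `x` a representative
of `u`; every unmatched position of `x` carries a `0`.  Let `y` be obtained from `x` by
changing every unmatched position to `1`, and let `v` be the necklace of `y`.  Then
`rank v = n − rank u` (so `2·rank v ≥ n`), the matched pairs of `y` equal those of `x`,
the unmatched positions of `y` are exactly the changed positions (all carrying `1`), and
changing all unmatched positions of `y` back to `0` recovers `x`.  Consequently, if `w`
is the Lyndon rearrangement of `y`, it has `m = rank v − rank u` unmatched positions and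
`u` is the necklace of `w_m`. -/
theorem lower_half_fill (n : ℕ) [NeZero n] (u : Necklace n) (x : Word n)
    (hx : nec x = u) (hrk : 2 * rank u ≤ n)
    (y : Word n)
    (hy : y = fun j => if j ∈ unmatchedPos x then true else x j) :
    (∀ p ∈ unmatchedPos x, x p = false) ∧
    rank (nec y) = n - rank u ∧
    n ≤ 2 * rank (nec y) ∧
    matching y = matching x ∧
    unmatchedPos y = unmatchedPos x ∧
    (∀ p ∈ unmatchedPos y, y p = true) ∧
    (fun j => if j ∈ unmatchedPos y then false else y j) = x ∧
    (unmatchedPos (lyndonOf y)).card = rank (nec y) - rank u ∧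
    nec (wT (lyndonOf y) (rank (nec y) - rank u)) = u := by
  classical
  have hmax := matching_isMaximal x
  have hrkx : rank u = wt x := by rw [← hx, rank_nec]
  have h2wt : 2 * wt x ≤ n := by omega
  have hfree : ∀ p ∈ unmatchedPos x, x p = false := fun p hp =>
    free_false_of_maximal hmax h2wt p hp
  have hagree : ∀ p ∈ matchedPos (matching x), y p = x p := by
    intro p hp
    rw [hy]
    simp only
    rw [if_neg]
    intro hmem
    exact (Finset.mem_sdiff.mp hmem).2 hp
  have hymax : IsMaximalMatching y (matching x) := by
    constructor
    · exact replay hmax.1 hagree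
    · intro N hN
      cases hN with
      | @step i j hi hwi hj hj1 =>
        have hiu : i ∈ unmatchedPos x := Finset.mem_sdiff.mpr ⟨Finset.mem_univ i, hi⟩
        rw [hy] at hwi
        simp only at hwi
        rw [if_pos hiu] at hwi
        exact absurd hwi (by simp)
  have hmy : matching y = matching x := matching_eq hymax
  have hup : unmatchedPos y = unmatchedPos x := by
    unfold unmatchedPos
    rw [hmy]
  have hyt : ∀ p ∈ unmatchedPos y, y p = true := by
    intro p hp
    rw [hup] at hp
    rw [hy]
    simp only
    rw [if_pos hp]
  have hback : (fun j => if j ∈ unmatchedPos y then false else y j) = x := by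
    rw [hup]
    funext j
    by_cases hj : j ∈ unmatchedPos x
    · rw [if_pos hj]
      exact (hfree j hj).symm
    · rw [if_neg hj, hy]
      simp only
      rw [if_neg hj]
  -- counting
  have hcnt := reach_count hmax.1
  have h2c : 2 * (matching x).card ≤ n := by
    rw [← hcnt.1]; exact matchedPos_card_le
  have hfreecard : (unmatchedPos x).card = n - 2 * (matching x).card := by
    have e : (unmatchedPos x).card = n - (matchedPos (matching x)).card := by
      unfold unmatchedPos
      rw [Finset.card_sdiff_of_subset (Finset.subset_univ _), Finset.card_univ, Fintype.card_fin]
    rw [e, hcnt.1]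
  have hft0 : ((Finset.univ \ matchedPos (matching x)).filter fun p => x p = true) = ∅ := by
    ext p
    simp only [Finset.mem_filter, Finset.notMem_empty, iff_false, not_and]
    intro hp1 hp2
    rw [hfree p hp1] at hp2
    exact absurd hp2 (by simp)
  have hwtc : wt x = (matching x).card := by
    rw [wt_eq hmax.1, hft0]
    simp
  have hwty : wt y = (unmatchedPos x).card + wt x := by
    unfold wt
    have hset : (Finset.univ.filter fun j => y j = true) =
        unmatchedPos x ∪ (Finset.univ.filter fun j => x j = true) := by
      ext j
      simp only [Finset.mem_filter, Finset.mem_univ, true_and, Finset.mem_union]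
      rw [hy]
      simp only
      by_cases hj : j ∈ unmatchedPos x
      · simp [hj]
      · simp [hj]
    rw [hset, Finset.card_union_of_disjoint]
    rw [Finset.disjoint_left]
    intro a ha hafil
    rw [Finset.mem_filter] at hafil
    rw [hfree a ha] at hafil
    exact absurd hafil.2 (by simp)
  have hranky : rank (nec y) = n - rank u := by
    rw [rank_nec, hrkx, hwty, hfreecard, hwtc]
    omega
  obtain ⟨i, hlyn⟩ := lyndonOf_eq_rot y
  have hcard_lyn : (unmatchedPos (lyndonOf y)).card = rank (nec y) - rank u := by
    rw [hlyn, unmatchedPos_rot, Finset.card_image_of_injective _ (add_left_injective i),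
      hup, hranky, hrkx, hfreecard, hwtc]
    omega
  have hfinal : nec (wT (lyndonOf y) (rank (nec y) - rank u)) = u := by
    rw [hcard_lyn.symm, wT_card_eq]
    have hflip : (fun j => if j ∈ unmatchedPos (lyndonOf y) then false else lyndonOf y j)
        = rot i x := by
      funext j
      rw [hlyn]
      by_cases hj : j ∈ unmatchedPos (rot i y)
      · rw [if_pos hj]
        have hj' : j - i ∈ unmatchedPos x := by
          rw [← hup]
          exact unmatched_rot_mem.mp hj
        exact (hfree _ hj').symm
      · rw [if_neg hj]
        have hj' : j - i ∉ unmatchedPos x := by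
          rw [← hup]
          exact fun h => hj (unmatched_rot_mem.mpr h)
        show y (j - i) = x (j - i)
        rw [hy]
        simp only
        rw [if_neg hj']
    rw [hflip, nec_rot, hx]
  exact ⟨hfree, hranky, by omega, hmy, hup, hyt, hback, hcard_lyn, hfinal⟩
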